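/- arXiv:1204.4173 — 3 statements merged into one kernel-verified Lean document; each statement's English description precedes it below -/
import Mathlib

section
/- For every countable ordinal γ > 1 and every nondecreasing sequence of ordinals (a_n) with limit sup_n (a_n + 1) = γ, and every α with 1 < α ≤ γ, there exists a nondecreasing ω-sequence (b_n) of ordinals with b_n ≤ a_n for all n and sup_n (b_n + 1) = α. (This is the essential content of the existence of the coherent sequence system in Lemma 2.2.) -/
/-- essential content of Lemma 2.2 (existence of a coherent
dominated sequence). -/
theorem stmt0 (γ : Ordinal) (hγcount : γ.card ≤ Cardinal.aleph0) (hγ : 1 < γ)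
    (a : ℕ → Ordinal) (ha : Monotone a) (hsup : (⨆ n, a n + 1) = γ)
    (α : Ordinal) (hα1 : 1 < α) (hαγ : α ≤ γ) :
    ∃ b : ℕ → Ordinal, Monotone b ∧ (∀ n, b n ≤ a n) ∧ (⨆ n, b n + 1) = α := by
  have hα0 : α ≠ 0 := (zero_lt_one.trans hα1).ne'
  have hcard : α.card ≤ Cardinal.aleph0 := (Ordinal.card_le_card hαγ).trans hγcount
  have hcnt : Countable α.ToType := by
    rw [← Cardinal.mk_le_aleph0_iff, Cardinal.mk_toType]; exact hcard
  have hne : Nonempty α.ToType := Ordinal.toType_nonempty_iff_ne_zero.2 hα0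
  obtain ⟨f, hf⟩ := exists_surjective_nat α.ToType
  set g : ℕ → Ordinal := fun k => ((Ordinal.ToType.mk (o := α)).symm (f k)).1 with hg
  have hg_lt : ∀ k, g k < α := fun k => ((Ordinal.ToType.mk (o := α)).symm (f k)).2
  have hg_surj : ∀ β < α, ∃ k, g k = β := by
    intro β hβ
    obtain ⟨k, hk⟩ := hf (Ordinal.ToType.mk (o := α) ⟨β, hβ⟩)
    exact ⟨k, by simp [hg, hk]⟩
  set c : ℕ → Ordinal := fun n =>
    (Finset.range (n + 1)).sup' (Finset.nonempty_range_iff.2 (Nat.succ_ne_zero n)) g with hc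
  have hc_mono : Monotone c := by
    intro m n hmn
    exact Finset.sup'_mono g (Finset.range_subset_range.2 (by omega)) _
  have hc_lt : ∀ n, c n < α := by
    intro n
    rw [hc, Finset.sup'_lt_iff]
    exact fun k _ => hg_lt k
  have hg_le_c : ∀ k n, k ≤ n → g k ≤ c n := by
    intro k n hkn
    exact Finset.le_sup' g (Finset.mem_range.2 (by omega : k < n + 1))
  -- from hsup: every β < γ is ≤ some a N
  have ha_cof : ∀ β < γ, ∃ N, β ≤ a N := by
    intro β hβ
    rw [← hsup] at hβ
    obtain ⟨N, hN⟩ := Ordinal.lt_iSup_iff.1 hβ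
    exact ⟨N, by rwa [Ordinal.add_one_eq_succ, Order.lt_succ_iff] at hN⟩
  refine ⟨fun n => min (a n) (c n), fun m n hmn => le_min ((min_le_left _ _).trans (ha hmn))
    ((min_le_right _ _).trans (hc_mono hmn)), fun n => min_le_left _ _, ?_⟩
  apply le_antisymm
  · refine Ordinal.iSup_le_iff.2 fun n => ?_
    rw [Ordinal.add_one_eq_succ, Order.succ_le_iff]
    exact (min_le_right _ _).trans_lt (hc_lt n)
  · refine le_of_forall_lt fun β hβ => ?_
    obtain ⟨k, hk⟩ := hg_surj β hβ
    obtain ⟨N, hN⟩ := ha_cof β (hβ.trans_le hαγ)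
    refine Ordinal.lt_iSup_iff.2 ⟨max k N, ?_⟩
    have h1 : β ≤ a (max k N) := hN.trans (ha (le_max_right _ _))
    have h2 : β ≤ c (max k N) := hk ▸ hg_le_c k _ (le_max_left _ _)
    rw [Ordinal.add_one_eq_succ, Order.lt_succ_iff]
    exact le_min h1 h2
end

section
/- For each countable ordinal γ there exists a family of nondecreasing ω-sequences of ordinals (a_{α}^n)_{n<ω}, indexed by ordinals α with 1 < α ≤ γ, such that for each α, sup_n (a_α^n + 1) = α, and whenever 1 < α < β ≤ γ we have a_α^n ≤ a_β^n for every natural number n. -/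
open Ordinal Set

/-- Lemma 2.2. For each countable ordinal γ there is a coherent
system of nondecreasing ω-sequences of ordinals indexed by 1 < α ≤ γ. -/
theorem stmt1 (γ : Ordinal) (hγcount : γ.card ≤ Cardinal.aleph0) :
    ∃ a : Ordinal → ℕ → Ordinal,
      (∀ α, 1 < α → α ≤ γ → Monotone (a α) ∧ (⨆ n, a α n + 1) = α) ∧
      (∀ α β, 1 < α → α < β → β ≤ γ → ∀ n, a α n ≤ a β n) := by
  -- the set of ordinals below γ is countable
  have hcount : (Set.Iio γ).Countable := by
    rw [← Cardinal.le_aleph0_iff_set_countable, Ordinal.mk_Iio_ordinal,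
      Cardinal.lift_le_aleph0]
    exact hγcount
  obtain ⟨f, hf⟩ := Set.countable_iff_exists_injective.mp hcount
  classical
  -- partial inverse of the coding
  set g : ℕ → Ordinal := fun k => if h : ∃ ξ : Set.Iio γ, f ξ = k then (h.choose : Ordinal) else 0
    with hg
  have hginv : ∀ ξ (hξ : ξ < γ), g (f ⟨ξ, hξ⟩) = ξ := by
    intro ξ hξ
    have h : ∃ ξ' : Set.Iio γ, f ξ' = f ⟨ξ, hξ⟩ := ⟨⟨ξ, hξ⟩, rfl⟩
    have := hf h.choose_spec
    simp only [hg, dif_pos h, this]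
  refine ⟨fun α n => ((Finset.range n).filter (fun k => g k < α)).sup g, ?_, ?_⟩
  · intro α hα1 hαγ
    have h0α : (0 : Ordinal) < α := lt_trans zero_lt_one hα1
    have hlt : ∀ n, ((Finset.range n).filter (fun k => g k < α)).sup g < α := by
      intro n
      rw [Finset.sup_lt_iff h0α]
      intro k hk
      exact (Finset.mem_filter.mp hk).2
    have hbdd : BddAbove (Set.range fun n => ((Finset.range n).filter (fun k => g k < α)).sup g + 1) := by
      refine ⟨α, ?_⟩
      rintro x ⟨n, rfl⟩
      exact (Order.add_one_le_iff.mpr (hlt n))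
    constructor
    · intro m n hmn
      exact Finset.sup_mono (Finset.filter_subset_filter _ (Finset.range_subset_range.mpr hmn))
    · apply le_antisymm
      · exact ciSup_le fun n => Order.add_one_le_iff.mpr (hlt n)
      · by_contra hc
        push_neg at hc
        set s := ⨆ n, ((Finset.range n).filter (fun k => g k < α)).sup g + 1 with hs
        have hsγ : s < γ := lt_of_lt_of_le hc hαγ
        set k := f ⟨s, hsγ⟩ with hk
        have hgk : g k = s := hginv s hsγ
        have hmem : k ∈ (Finset.range (k + 1)).filter (fun k => g k < α) := by
          rw [Finset.mem_filter, Finset.mem_range, hgk]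
          exact ⟨Nat.lt_succ_self k, hc⟩
        have h1 : s ≤ ((Finset.range (k + 1)).filter (fun k => g k < α)).sup g := by
          rw [← hgk]
          exact Finset.le_sup hmem
        have h2 : s + 1 ≤ s := le_trans (add_le_add_left h1 1) (le_ciSup hbdd (k + 1))
        exact absurd h2 (by simp)
  · intro α β hα1 hαβ hβγ n
    apply Finset.sup_mono
    intro k hk
    rw [Finset.mem_filter] at *
    exact ⟨hk.1, lt_trans hk.2 hαβ⟩
end

section
/- Assume 𝔡 = 𝔠. Then every filter on ℕ generated by fewer than 𝔠 sets can be extended to a P-point; conversely, if every filter generated by fewer than 𝔠 sets extends to a P-point, then 𝔡 = 𝔠. -/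
open Set Filter Cardinal

attribute [local instance] Classical.propDecidable

/-- A P-point: a free ultrafilter on ℕ such that every countable family of its
members admits a pseudo-intersection in the ultrafilter. -/
def IsPPoint (U : Ultrafilter ℕ) : Prop :=
  (↑U : Filter ℕ) ≤ Filter.cofinite ∧
  ∀ A : ℕ → Set ℕ, (∀ n, A n ∈ U) → ∃ S ∈ U, ∀ n, (S \ A n).Finite

/-- The dominating number 𝔡. -/
noncomputable def dNum : Cardinal :=
  sInf {c | ∃ D : Set (ℕ → ℕ), (∀ g : ℕ → ℕ, ∃ f ∈ D, ∀ n, g n < f n) ∧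
    c = Cardinal.mk D}

/-! ### Auxiliary lemmas about `dNum` -/

lemma dSet_nonempty : {c | ∃ D : Set (ℕ → ℕ), (∀ g : ℕ → ℕ, ∃ f ∈ D, ∀ n, g n < f n) ∧
    c = Cardinal.mk D}.Nonempty :=
  ⟨#(Set.univ : Set (ℕ → ℕ)), Set.univ,
    fun g => ⟨fun n => g n + 1, Set.mem_univ _, fun n => Nat.lt_succ_self _⟩, rfl⟩

lemma dNum_le_continuum : dNum ≤ Cardinal.continuum := by
  calc dNum ≤ #(Set.univ : Set (ℕ → ℕ)) := csInf_le'
        ⟨Set.univ, fun g => ⟨fun n => g n + 1, Set.mem_univ _, fun _ => Nat.lt_succ_self _⟩, rfl⟩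
    _ = Cardinal.continuum := by
        rw [Cardinal.mk_univ, Cardinal.mk_arrow]; simp

lemma not_dominating_of_mk_lt_dNum {D : Set (ℕ → ℕ)} (h : #D < dNum) :
    ∃ g : ℕ → ℕ, ∀ f ∈ D, ∃ n, f n ≤ g n := by
  by_contra hc
  push_neg at hc
  have : dNum ≤ #D := csInf_le' ⟨D, by
    intro g
    obtain ⟨f, hf, hfg⟩ := hc g
    exact ⟨f, hf, fun n => hfg n⟩, rfl⟩
  exact absurd this (not_le.2 h)

lemma exists_dominating_of_card_dNum :
    ∃ D : Set (ℕ → ℕ), (∀ g : ℕ → ℕ, ∃ f ∈ D, ∀ n, g n < f n) ∧ #D = dNum := by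
  obtain ⟨D, hD, hc⟩ := csInf_mem dSet_nonempty
  exact ⟨D, hD, hc.symm⟩

lemma not_countable_dominating {D : Set (ℕ → ℕ)}
    (hD : ∀ g : ℕ → ℕ, ∃ f ∈ D, ∀ n, g n < f n) : ¬ (#D ≤ ℵ₀) := by
  intro hle
  have hcnt : D.Countable := Set.countable_coe_iff.mp (Cardinal.mk_le_aleph0_iff.1 hle)
  have hne : D.Nonempty := by
    obtain ⟨f, hf, -⟩ := hD (fun _ => 0); exact ⟨f, hf⟩
  obtain ⟨F, hF⟩ := hcnt.exists_eq_range hne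
  obtain ⟨f, hf, hdom⟩ := hD (fun n => (Finset.range (n+1)).sup (fun i => F i n))
  rw [hF] at hf
  obtain ⟨i, rfl⟩ := hf
  have : F i i ≤ (Finset.range (i+1)).sup (fun j => F j i) :=
    Finset.le_sup (f := fun j => F j i) (Finset.mem_range.2 (Nat.lt_succ_self i))
  exact absurd (hdom i) (not_lt.2 this)

lemma aleph0_lt_dNum : ℵ₀ < dNum := by
  obtain ⟨D, hD, hc⟩ := exists_dominating_of_card_dNum
  rw [← hc, lt_iff_not_ge]
  intro hle
  exact not_countable_dominating hD hle

/-! ### Good families -/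

/-- A family of subsets of ℕ all of whose finite intersections are infinite. -/
def Good (G : Set (Set ℕ)) : Prop := ∀ s ⊆ G, s.Finite → (⋂₀ s).Infinite

lemma good_insert_or {G : Set (Set ℕ)} (hG : Good G) (X : Set ℕ) :
    Good (insert X G) ∨ Good (insert Xᶜ G) := by
  by_contra h
  push_neg at h
  obtain ⟨h1, h2⟩ := h
  simp only [Good, not_forall] at h1 h2
  obtain ⟨s₁, hs₁, hfin₁, hinf₁⟩ := h1
  obtain ⟨s₂, hs₂, hfin₂, hinf₂⟩ := h2
  rw [Set.not_infinite] at hinf₁ hinf₂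
  have ht₁ : s₁ \ {X} ⊆ G := fun Y hY => (hs₁ hY.1).resolve_left hY.2
  have ht₂ : s₂ \ {Xᶜ} ⊆ G := fun Y hY => (hs₂ hY.1).resolve_left hY.2
  have hsub : ⋂₀ ((s₁ \ {X}) ∪ (s₂ \ {Xᶜ})) ⊆ ⋂₀ s₁ ∪ ⋂₀ s₂ := by
    intro x hx
    by_cases hxX : x ∈ X
    · left
      intro Y hY
      by_cases hYX : Y = X
      · exact hYX ▸ hxX
      · exact hx Y (Or.inl ⟨hY, hYX⟩)
    · right
      intro Y hY
      by_cases hYX : Y = Xᶜ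
      · exact hYX ▸ hxX
      · exact hx Y (Or.inr ⟨hY, hYX⟩)
  have := hG _ (Set.union_subset ht₁ ht₂) ((hfin₁.diff).union (hfin₂.diff))
  exact this ((hinf₁.union hinf₂).subset hsub)

lemma mk_finite_subsets_le (G : Set (Set ℕ)) :
    #{s : Set (Set ℕ) // s ⊆ G ∧ s.Finite} ≤ max ℵ₀ #G := by
  classical
  have hinj : Function.Injective
      (fun s : {s : Set (Set ℕ) // s ⊆ G ∧ s.Finite} =>
        (Set.Finite.toFinset (s := ((↑) ⁻¹' s.1 : Set ↥G))
          (s.2.2.preimage (Subtype.coe_injective.injOn)))) := by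
    intro s t hst
    apply Subtype.ext
    have : ((↑) ⁻¹' s.1 : Set ↥G) = ((↑) ⁻¹' t.1 : Set ↥G) :=
      (Set.Finite.toFinset_inj (hs := (s.2.2.preimage (Subtype.coe_injective.injOn)))
        (ht := (t.2.2.preimage (Subtype.coe_injective.injOn)))).1 hst
    ext X
    constructor
    · intro hX
      have hXG : X ∈ G := s.2.1 hX
      have : (⟨X, hXG⟩ : ↥G) ∈ ((↑) ⁻¹' t.1 : Set ↥G) := by rw [← this]; exact hX
      exact this
    · intro hX
      have hXG : X ∈ G := t.2.1 hX
      have : (⟨X, hXG⟩ : ↥G) ∈ ((↑) ⁻¹' s.1 : Set ↥G) := by rw [this]; exact hX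
      exact this
  have h1 : #{s : Set (Set ℕ) // s ⊆ G ∧ s.Finite} ≤ #(Finset ↥G) :=
    Cardinal.mk_le_of_injective hinj
  rcases finite_or_infinite ↥G with hf | hi
  · haveI := Fintype.ofFinite ↥G
    exact h1.trans ((Cardinal.lt_aleph0_of_finite _).le.trans (le_max_left _ _))
  · rw [Cardinal.mk_finset_of_infinite] at h1
    exact h1.trans (le_max_right _ _)

/-! ### The key combinatorial step (Ketonen) -/

lemma seq_step {G : Set (Set ℕ)} (hG : Good G) (hsm : #G < dNum)
    (A : ℕ → Set ℕ)
    (hb : ∀ s ⊆ G, s.Finite → ∀ n, (⋂₀ s ∩ ⋂ i ∈ Finset.range (n+1), A i).Infinite) :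
    ∃ S : Set ℕ, (∀ n, (S \ A n).Finite) ∧ Good (insert S G) := by
  classical
  set C : ℕ → Set ℕ := fun n => ⋂ i ∈ Finset.range (n+1), A i with hC
  set σ := {s : Set (Set ℕ) // s ⊆ G ∧ s.Finite} with hσ
  have key : ∀ (p : σ × ℕ) (n : ℕ), ∃ m : ℕ, ∃ t : Finset ℕ,
      ↑t ⊆ ⋂₀ p.1.1 ∩ C (n + p.2) ∧ (∀ x ∈ t, x ≤ m) ∧ t.card = n + p.2 + 1 := by
    intro p n
    obtain ⟨t, ht, hcard⟩ := (hb p.1.1 p.1.2.1 p.1.2.2 (n + p.2)).exists_subset_card_eq (n + p.2 + 1)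
    exact ⟨t.sup id, t, ht, fun x hx => Finset.le_sup (f := id) hx, hcard⟩
  choose f hf using key
  set D : Set (ℕ → ℕ) := Set.range f with hD
  have hDsm : #D < dNum := by
    have h1 : #D ≤ #(σ × ℕ) := Cardinal.mk_range_le
    have h2 : #(σ × ℕ) ≤ max ℵ₀ (max ℵ₀ #G) := by
      rw [Cardinal.mk_prod, Cardinal.lift_id, Cardinal.lift_id, Cardinal.mk_nat]
      calc #σ * ℵ₀ ≤ max ℵ₀ #G * ℵ₀ :=
            mul_le_mul_left (mk_finite_subsets_le G) _
        _ ≤ max (max (max ℵ₀ #G) ℵ₀) ℵ₀ := Cardinal.mul_le_max _ _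
        _ ≤ max ℵ₀ (max ℵ₀ #G) := by
            simp [max_le_iff, le_max_iff, le_refl]
    refine (h1.trans h2).trans_lt ?_
    exact max_lt aleph0_lt_dNum (max_lt aleph0_lt_dNum hsm)
  obtain ⟨g, hg⟩ := not_dominating_of_mk_lt_dNum hDsm
  set g' : ℕ → ℕ := fun m => (Finset.range (m+1)).sup g with hg'
  have hg'mono : ∀ {m n : ℕ}, m ≤ n → g' m ≤ g' n := by
    intro m n hmn
    exact Finset.sup_mono (Finset.range_subset_range.2 (Nat.succ_le_succ hmn))
  have hgg' : ∀ {n m : ℕ}, n ≤ m → g n ≤ g' m := by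
    intro n m hnm
    exact Finset.le_sup (Finset.mem_range.2 (Nat.lt_succ_of_le hnm))
  set S : Set ℕ := ⋃ n, (C n ∩ Set.Iic (g' n)) with hS
  refine ⟨S, ?_, ?_⟩
  · intro j
    apply (Set.finite_Iic (g' j)).subset
    rintro x ⟨hxS, hxA⟩
    obtain ⟨n, hxC, hxle⟩ := by
      simpa only [hS, Set.mem_iUnion, Set.mem_inter_iff] using hxS
    have hnj : n ≤ j := by
      by_contra hn
      push_neg at hn
      exact hxA (by
        have := hxC
        simp only [hC, Set.mem_iInter] at this
        exact this j (Finset.mem_range.2 (Nat.lt_succ_of_lt hn)))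
    exact (hxle : x ≤ g' n).trans (hg'mono hnj)
  · intro s hs hsfin
    by_cases hSs : S ∈ s
    · have hs' : s \ {S} ⊆ G := fun Y hY => ((hs hY.1).resolve_left hY.2)
      have hfin' : (s \ {S}).Finite := hsfin.diff
      have hkey : ∀ k : ℕ, ∃ t : Finset ℕ, ↑t ⊆ ⋂₀ s ∧ k + 1 ≤ t.card := by
        intro k
        set p : σ × ℕ := (⟨s \ {S}, hs', hfin'⟩, k) with hp
        obtain ⟨n, hn⟩ := hg (f p) ⟨p, rfl⟩
        obtain ⟨t0, ht0sub, ht0le, ht0card⟩ := hf p n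
        refine ⟨t0, ?_, ?_⟩
        · intro x hx
          have hx1 := ht0sub hx
          have hxB : x ∈ ⋂₀ (s \ {S}) := hx1.1
          have hxC : x ∈ C (n + k) := hx1.2
          have hxle : x ≤ g' (n + k) :=
            ((ht0le x hx).trans hn).trans (hgg' (Nat.le_add_right n k))
          have hxS : x ∈ S := Set.mem_iUnion.2 ⟨n + k, hxC, hxle⟩
          intro Y hY
          by_cases hYS : Y = S
          · exact hYS ▸ hxS
          · exact hxB Y ⟨hY, hYS⟩
        · have hpk : p.2 = k := rfl
          rw [ht0card, hpk]; omega
      intro hfinInter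
      obtain ⟨t, hts, htc⟩ := hkey hfinInter.toFinset.card
      have hsub : t ⊆ hfinInter.toFinset := fun x hx => hfinInter.mem_toFinset.2 (hts hx)
      have := Finset.card_le_card hsub
      omega
    · exact hG s (fun Y hY => (hs hY).resolve_left (fun h => hSs (h ▸ hY))) hsfin

/-! ### The transfinite recursion -/

abbrev Idx : Type := (Cardinal.continuum.{0}).ord.ToType

/-- Condition for the sequence-handling stage. -/
def SeqCond (A : ℕ → Set ℕ) (prev : Set (Set ℕ)) : Prop :=
  (∀ s ⊆ prev, s.Finite → ∀ n, (⋂₀ s ∩ ⋂ i ∈ Finset.range (n+1), A i).Infinite) ∧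
  ∃ S : Set ℕ, (∀ n, (S \ A n).Finite) ∧ Good (insert S prev)

noncomputable def stepBody (prev : Set (Set ℕ)) : (Set ℕ ⊕ (ℕ → Set ℕ)) → Set (Set ℕ)
  | Sum.inl X => if Good (insert X prev) then {X} else {Xᶜ}
  | Sum.inr A => if h : SeqCond A prev then {h.2.choose} else ∅

lemma stepBody_inl (prev : Set (Set ℕ)) (X : Set ℕ) :
    stepBody prev (Sum.inl X) = if Good (insert X prev) then {X} else {Xᶜ} := rfl

lemma stepBody_inr (prev : Set (Set ℕ)) (A : ℕ → Set ℕ) :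
    stepBody prev (Sum.inr A) = if h : SeqCond A prev then {h.2.choose} else ∅ := rfl

lemma stepBody_subsingleton (prev : Set (Set ℕ)) (t : Set ℕ ⊕ (ℕ → Set ℕ)) :
    (stepBody prev t).Subsingleton := by
  rcases t with X | A
  · rw [stepBody_inl]; split <;> exact Set.subsingleton_singleton
  · rw [stepBody_inr]; split
    · exact Set.subsingleton_singleton
    · exact Set.subsingleton_empty

noncomputable def stepFun (G₀ : Set (Set ℕ)) (e : Idx → Set ℕ ⊕ (ℕ → Set ℕ)) :
    Idx → Set (Set ℕ) :=
  IsWellFounded.fix (· < ·) (fun i rec =>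
    stepBody (G₀ ∪ ⋃ j : {j : Idx // j < i}, rec j j.2) (e i))

noncomputable def below (G₀ : Set (Set ℕ)) (e : Idx → Set ℕ ⊕ (ℕ → Set ℕ)) (i : Idx) :
    Set (Set ℕ) := G₀ ∪ ⋃ j : {j : Idx // j < i}, stepFun G₀ e j

noncomputable def upto (G₀ : Set (Set ℕ)) (e : Idx → Set ℕ ⊕ (ℕ → Set ℕ)) (i : Idx) :
    Set (Set ℕ) := G₀ ∪ ⋃ j : {j : Idx // j ≤ i}, stepFun G₀ e j

lemma stepFun_eq (G₀ : Set (Set ℕ)) (e : Idx → Set ℕ ⊕ (ℕ → Set ℕ)) (i : Idx) :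
    stepFun G₀ e i = stepBody (below G₀ e i) (e i) := by
  have h := IsWellFounded.fix_eq (α := Idx) (· < ·)
    (fun i rec => stepBody (G₀ ∪ ⋃ j : {j : Idx // j < i}, rec j j.2) (e i)) i
  exact h

lemma upto_eq (G₀ : Set (Set ℕ)) (e : Idx → Set ℕ ⊕ (ℕ → Set ℕ)) (i : Idx) :
    upto G₀ e i = below G₀ e i ∪ stepFun G₀ e i := by
  ext X
  simp only [upto, below, Set.mem_union, Set.mem_iUnion]
  constructor
  · rintro (h | ⟨⟨j, hj⟩, hX⟩)
    · exact Or.inl (Or.inl h)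
    · rcases lt_or_eq_of_le hj with h' | rfl
      · exact Or.inl (Or.inr ⟨⟨j, h'⟩, hX⟩)
      · exact Or.inr hX
  · rintro ((h | ⟨⟨j, hj⟩, hX⟩) | h)
    · exact Or.inl h
    · exact Or.inr ⟨⟨j, hj.le⟩, hX⟩
    · exact Or.inr ⟨⟨i, le_refl i⟩, h⟩

lemma good_of_parts {G₀ : Set (Set ℕ)} {e : Idx → Set ℕ ⊕ (ℕ → Set ℕ)}
    (hG₀ : Good G₀) {I : Set Idx} (h : ∀ j ∈ I, Good (upto G₀ e j)) :
    Good (G₀ ∪ ⋃ j : I, stepFun G₀ e j) := by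
  classical
  intro s hs hsfin
  have hx : ∀ x ∈ s, x ∈ G₀ ∨ ∃ j : I, x ∈ stepFun G₀ e j := by
    intro x hxx
    simpa only [Set.mem_union, Set.mem_iUnion] using hs hxx
  by_cases hall : ∀ x ∈ s, x ∈ G₀
  · exact hG₀ s hall hsfin
  push_neg at hall
  have hch : ∀ x : {x // x ∈ s ∧ x ∉ G₀}, ∃ j : I, ↑x ∈ stepFun G₀ e j := by
    rintro ⟨x, hxs, hxG⟩
    rcases hx x hxs with h' | h'
    · exact absurd h' hxG
    · exact h'
  choose jf hjf using hch
  haveI : Finite {x // x ∈ s ∧ x ∉ G₀} :=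
    (hsfin.subset (fun x (hx : x ∈ s ∧ x ∉ G₀) => hx.1)).to_subtype
  obtain ⟨x₀, hx₀s, hx₀G⟩ := hall
  haveI : Nonempty {x // x ∈ s ∧ x ∉ G₀} := ⟨⟨x₀, hx₀s, hx₀G⟩⟩
  obtain ⟨xm, hxm⟩ := Finite.exists_max (fun x : {x // x ∈ s ∧ x ∉ G₀} => (jf x : Idx))
  apply h (jf xm) (jf xm).2 s _ hsfin
  intro x hxs
  by_cases hxG : x ∈ G₀
  · exact Or.inl hxG
  · right
    rw [Set.mem_iUnion]
    exact ⟨⟨jf ⟨x, hxs, hxG⟩, hxm ⟨x, hxs, hxG⟩⟩, hjf ⟨x, hxs, hxG⟩⟩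

lemma mk_below_lt {G₀ : Set (Set ℕ)} {e : Idx → Set ℕ ⊕ (ℕ → Set ℕ)}
    (hsm : #G₀ < Cardinal.continuum) (i : Idx) :
    #(below G₀ e i) < Cardinal.continuum := by
  have h1 : #(below G₀ e i) ≤ #G₀ + #(⋃ j : {j : Idx // j < i}, stepFun G₀ e j) :=
    Cardinal.mk_union_le _ _
  have h2 : #(⋃ j : {j : Idx // j < i}, stepFun G₀ e j) ≤ #{j : Idx // j < i} := by
    refine Cardinal.mk_iUnion_le_sum_mk.trans ?_
    have : (Cardinal.sum fun j : {j : Idx // j < i} => #(stepFun G₀ e j)) ≤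
        Cardinal.sum fun _ : {j : Idx // j < i} => (1 : Cardinal) :=
      Cardinal.sum_le_sum _ _ (fun j =>
        Cardinal.mk_le_one_iff_set_subsingleton.2
          ((stepFun_eq G₀ e j) ▸ stepBody_subsingleton _ _))
    simpa using this
  have h3 : #{j : Idx // j < i} < Cardinal.continuum :=
    Cardinal.mk_Iio_ord_toType i
  exact (h1.trans (add_le_add le_rfl h2)).trans_lt
    (Cardinal.add_lt_of_lt Cardinal.aleph0_le_continuum hsm h3)

lemma good_below_and_upto {G₀ : Set (Set ℕ)} {e : Idx → Set ℕ ⊕ (ℕ → Set ℕ)}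
    (hG₀ : Good G₀) (i : Idx) : Good (upto G₀ e i) := by
  refine IsWellFounded.induction (α := Idx) (· < ·) (motive := fun i => Good (upto G₀ e i)) i ?_
  intro i IH
  have hbelow : Good (below G₀ e i) := by
    have h := good_of_parts (e := e) hG₀ (I := Set.Iio i) (fun j hj => IH j hj)
    exact h
  rw [upto_eq, stepFun_eq]
  rcases htask : e i with X | A
  · rw [stepBody_inl]
    split_ifs with hcase
    · rw [Set.union_singleton]; exact hcase
    · rcases good_insert_or hbelow X with h' | h'
      · exact absurd h' hcase
      · rw [Set.union_singleton]; exact h'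
  · rw [stepBody_inr]
    split_ifs with hcase
    · rw [Set.union_singleton]; exact hcase.2.choose_spec.2
    · rw [Set.union_empty]; exact hbelow

lemma good_below {G₀ : Set (Set ℕ)} {e : Idx → Set ℕ ⊕ (ℕ → Set ℕ)}
    (hG₀ : Good G₀) (i : Idx) : Good (below G₀ e i) := by
  have h := good_of_parts (e := e) hG₀ (I := Set.Iio i) (fun j _ => good_below_and_upto hG₀ j)
  exact h

lemma mem_generate_self {α : Type*} {g : Set (Set α)} {X : Set α} (h : X ∈ g) :
    X ∈ Filter.generate g :=
  Filter.mem_generate_iff.2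
    ⟨{X}, Set.singleton_subset_iff.2 h, Set.finite_singleton X, (Set.sInter_singleton X).subset⟩

lemma exists_Ici_subset_sInter {s : Set (Set ℕ)} (hfin : s.Finite) :
    s ⊆ Set.range (fun n : ℕ => Set.Ici n) → ∃ N, Set.Ici N ⊆ ⋂₀ s := by
  refine Set.Finite.induction_on _ hfin ?_ ?_
  · intro _; exact ⟨0, by simp⟩
  · intro a t ha hfin IH hsub
    obtain ⟨N, hN⟩ := IH (fun Y hY => hsub (Set.mem_insert_of_mem a hY))
    obtain ⟨m, hm⟩ := hsub (Set.mem_insert a t)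
    refine ⟨max m N, ?_⟩
    rw [Set.sInter_insert]
    intro x hx
    exact ⟨by rw [← hm]; exact le_trans (le_max_left m N) hx,
      hN (le_trans (le_max_right m N) hx)⟩

/-! ### Forward direction -/

lemma forward_direction (hd : dNum = Cardinal.continuum) (F : Filter ℕ) (hFne : F ≠ ⊥)
    (hFcof : F ≤ Filter.cofinite)
    (hgen : ∃ B : Set (Set ℕ), Cardinal.mk B < Cardinal.continuum ∧ F = Filter.generate B) :
    ∃ U : Ultrafilter ℕ, IsPPoint U ∧ (↑U : Filter ℕ) ≤ F := by
  classical
  obtain ⟨B, hBsm, hFB⟩ := hgen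
  -- members of F are infinite
  have hFmem : ∀ X ∈ F, X.Infinite := by
    intro X hX hXfin
    have hXc : Xᶜ ∈ F := hFcof (by rwa [Filter.mem_cofinite, compl_compl])
    have : (∅ : Set ℕ) ∈ F := by
      have := Filter.inter_mem hX hXc
      rwa [Set.inter_compl_self] at this
    exact hFne (Filter.empty_mem_iff_bot.1 this)
  set G₀ : Set (Set ℕ) := B ∪ Set.range (fun n : ℕ => Set.Ici n) with hG₀def
  have hG₀ : Good G₀ := by
    intro s hs hsfin
    have h1 : ⋂₀ (s ∩ B) ∈ F := by
      rw [hFB, Filter.sInter_mem (hsfin.subset Set.inter_subset_left)]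
      exact fun X hX => mem_generate_self hX.2
    have hXinf : (⋂₀ (s ∩ B)).Infinite := hFmem _ h1
    obtain ⟨N, hN⟩ := exists_Ici_subset_sInter (hsfin.subset Set.diff_subset)
      (fun Y hY => ((hs hY.1).resolve_left hY.2))
    have hseq : ⋂₀ s = ⋂₀ (s ∩ B) ∩ ⋂₀ (s \ B) := by
      rw [← Set.sInter_union, Set.inter_union_diff]
    rw [hseq]
    have hsubset : ⋂₀ (s ∩ B) \ Set.Iio N ⊆ ⋂₀ (s ∩ B) ∩ ⋂₀ (s \ B) := by
      intro x hx
      exact ⟨hx.1, hN (Set.mem_Ici.2 (not_lt.1 (hx.2 : ¬ x < N)))⟩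
    exact ((hXinf.diff (Set.finite_Iio N)).mono hsubset)
  have hG₀sm : #G₀ < Cardinal.continuum := by
    have h1 : #G₀ ≤ #B + #(Set.range (fun n : ℕ => Set.Ici n)) := Cardinal.mk_union_le _ _
    have h2 : #(Set.range (fun n : ℕ => Set.Ici n)) ≤ ℵ₀ := by
      refine Cardinal.mk_range_le.trans ?_
      simp
    exact (h1.trans (add_le_add le_rfl h2)).trans_lt
      (Cardinal.add_lt_of_lt Cardinal.aleph0_le_continuum hBsm
        (Cardinal.aleph0_lt_continuum))
  -- an enumeration of all tasks
  have hcard : #(Set ℕ ⊕ (ℕ → Set ℕ)) = #Idx := by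
    rw [Cardinal.mk_toType, Cardinal.card_ord, Cardinal.mk_sum, Cardinal.lift_id,
      Cardinal.lift_id]
    have h1 : #(Set ℕ) = Cardinal.continuum := by simp [Cardinal.mk_set]
    have h2 : #(ℕ → Set ℕ) = Cardinal.continuum := by
      rw [Cardinal.mk_arrow]; simp [Cardinal.mk_set]
    rw [h1, h2, Cardinal.add_eq_self Cardinal.aleph0_le_continuum]
  obtain ⟨eqv'⟩ := Cardinal.eq.1 hcard
  set eqv : Idx ≃ (Set ℕ ⊕ (ℕ → Set ℕ)) := eqv'.symm with heqv
  set e : Idx → Set ℕ ⊕ (ℕ → Set ℕ) := ⇑eqv with he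
  -- the full generated family
  set Gall : Set (Set ℕ) := G₀ ∪ ⋃ j : Idx, stepFun G₀ e j with hGall
  have hGallGood : Good Gall := by
    have h := good_of_parts (e := e) hG₀ (I := Set.univ)
      (fun j _ => good_below_and_upto hG₀ j)
    have heq : (⋃ j : (Set.univ : Set Idx), stepFun G₀ e j) = ⋃ j : Idx, stepFun G₀ e j := by
      ext X
      simp only [Set.mem_iUnion]
      constructor
      · rintro ⟨j, hj⟩; exact ⟨j, hj⟩
      · rintro ⟨j, hj⟩; exact ⟨⟨j, Set.mem_univ j⟩, hj⟩
    rw [hGall]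
    rwa [heq] at h
  have hbelow_sub : ∀ i : Idx, below G₀ e i ⊆ Gall := by
    intro i X hX
    rcases hX with h | h
    · exact Or.inl h
    · obtain ⟨j, hj⟩ := Set.mem_iUnion.1 h
      exact Or.inr (Set.mem_iUnion.2 ⟨j, hj⟩)
  have hstep_sub : ∀ i : Idx, stepFun G₀ e i ⊆ Gall :=
    fun i X hX => Or.inr (Set.mem_iUnion.2 ⟨i, hX⟩)
  set L : Filter ℕ := Filter.generate Gall with hL
  have hmemL : ∀ X ∈ Gall, X ∈ L := fun X hX => mem_generate_self hX
  have hLinf : ∀ X ∈ L, X.Infinite := by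
    intro X hX
    obtain ⟨s, hs, hsfin, hsub⟩ := Filter.mem_generate_iff.1 hX
    exact (hGallGood s hs hsfin).mono hsub
  have hXor : ∀ X : Set ℕ, X ∈ Gall ∨ Xᶜ ∈ Gall := by
    intro X
    set i := eqv.symm (Sum.inl X) with hi
    have hei : e i = Sum.inl X := eqv.apply_symm_apply _
    have hstep : stepFun G₀ e i = stepBody (below G₀ e i) (Sum.inl X) := by
      rw [stepFun_eq, hei]
    rw [stepBody_inl] at hstep
    split_ifs at hstep with hcase
    · exact Or.inl (hstep_sub i (hstep ▸ Set.mem_singleton X))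
    · exact Or.inr (hstep_sub i (hstep ▸ Set.mem_singleton Xᶜ))
  have hcompl : ∀ X : Set ℕ, Xᶜ ∉ L ↔ X ∈ L := by
    intro X
    constructor
    · intro h
      exact hmemL X ((hXor X).resolve_right (fun hc => h (hmemL _ hc)))
    · intro hX hXc
      have hemp : (∅ : Set ℕ) ∈ L := by
        have := Filter.inter_mem hX hXc
        rwa [Set.inter_compl_self] at this
      exact Set.not_nonempty_empty (hLinf _ hemp).nonempty
  set U : Ultrafilter ℕ := Ultrafilter.ofComplNotMemIff L hcompl with hU
  have hUL : ∀ X : Set ℕ, X ∈ U ↔ X ∈ L := fun X => Iff.rfl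
  have hUcof : (↑U : Filter ℕ) ≤ Filter.cofinite := by
    intro X hX
    rw [Filter.mem_cofinite] at hX
    obtain ⟨N, hN⟩ := hX.bddAbove
    have hsub : Set.Ici (N+1) ⊆ X := by
      intro a ha
      by_contra hc
      exact absurd (hN hc) (by simpa using Nat.lt_of_succ_le ha)
    exact Filter.mem_of_superset
      (hmemL _ (Or.inl (Or.inr ⟨N+1, rfl⟩))) hsub
  refine ⟨U, ⟨hUcof, ?_⟩, ?_⟩
  · -- the P-point property
    intro A hA
    set i := eqv.symm (Sum.inr A) with hi
    have hei : e i = Sum.inr A := eqv.apply_symm_apply _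
    have hstep : stepFun G₀ e i = stepBody (below G₀ e i) (Sum.inr A) := by
      rw [stepFun_eq, hei]
    rw [stepBody_inr] at hstep
    have hcond : SeqCond A (below G₀ e i) := by
      by_contra hcond
      -- then the first conjunct must fail, by `seq_step`
      have hbgood : Good (below G₀ e i) := good_below hG₀ i
      have hbsm : #(below G₀ e i) < dNum := by rw [hd]; exact mk_below_lt hG₀sm i
      have hb : ¬ (∀ s ⊆ below G₀ e i, s.Finite →
          ∀ n, (⋂₀ s ∩ ⋂ k ∈ Finset.range (n+1), A k).Infinite) := by
        intro hb
        exact hcond ⟨hb, seq_step hbgood hbsm A hb⟩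
      push_neg at hb
      obtain ⟨s, hssub, hsfin, n, hfin⟩ := hb
      have h1 : ⋂₀ s ∈ U := by
        rw [hUL]
        exact Filter.mem_generate_iff.2
          ⟨s, fun Y hY => hbelow_sub i (hssub hY), hsfin, subset_rfl⟩
      have h2 : (⋂ k ∈ Finset.range (n+1), A k) ∈ U :=
        (Filter.biInter_finset_mem _).2 (fun k _ => hA k)
      have h3 := Filter.inter_mem h1 h2
      exact Set.not_infinite.2 hfin (hLinf _ ((hUL _).1 h3))
    rw [dif_pos hcond] at hstep
    refine ⟨hcond.2.choose, ?_, hcond.2.choose_spec.1⟩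
    rw [hUL]
    exact hmemL _ (hstep_sub i (hstep ▸ Set.mem_singleton _))
  · rw [hFB]
    exact Filter.le_generate_iff.2 (fun X hX => hmemL X (Or.inl (Or.inl hX)))

/-! ### Converse direction -/

lemma converse_direction
    (hext : ∀ (F : Filter ℕ), F ≠ ⊥ → F ≤ Filter.cofinite →
      (∃ B : Set (Set ℕ), Cardinal.mk B < Cardinal.continuum ∧
        F = Filter.generate B) →
      ∃ U : Ultrafilter ℕ, IsPPoint U ∧ (↑U : Filter ℕ) ≤ F) :
    dNum = Cardinal.continuum := by
  classical
  by_contra hne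
  have hlt : dNum < Cardinal.continuum := lt_of_le_of_ne dNum_le_continuum hne
  obtain ⟨D, hDdom, hDcard⟩ := exists_dominating_of_card_dNum
  have hDlt : #D < Cardinal.continuum := hDcard ▸ hlt
  set π : ℕ × ℕ ≃ ℕ := Denumerable.eqv (ℕ × ℕ) with hπ
  set Af : (ℕ → ℕ) → Set ℕ := fun f => π '' {p : ℕ × ℕ | f p.1 < p.2} with hAf
  set Bc : ℕ → Set ℕ := fun n => π '' {p : ℕ × ℕ | n < p.1} with hBc
  set Bgen : Set (Set ℕ) := Af '' D ∪ Set.range Bc with hBgen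
  -- key: finite intersections contain a "tail of a far column"
  have hkey : ∀ s : Set (Set ℕ), s.Finite → s ⊆ Bgen →
      ∃ (n₀ : ℕ) (M : ℕ → ℕ), ∀ N, n₀ ≤ N →
        π '' {p : ℕ × ℕ | p.1 = N ∧ M N < p.2} ⊆ ⋂₀ s := by
    intro s hsfin
    refine Set.Finite.induction_on _ hsfin ?_ ?_
    · intro _; exact ⟨0, fun _ => 0, fun N _ => by simp⟩
    · intro a t ha hfin IH hssub
      obtain ⟨n₀, M, hM⟩ := IH (fun Y hY => hssub (Set.mem_insert_of_mem a hY))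
      rcases hssub (Set.mem_insert a t) with ⟨f, hf, rfl⟩ | ⟨n, rfl⟩
      · refine ⟨n₀, fun N => max (M N) (f N), fun N hN => ?_⟩
        rw [Set.sInter_insert]
        rintro x ⟨p, ⟨hp1, hp2⟩, rfl⟩
        refine ⟨⟨p, ?_, rfl⟩, hM N hN ⟨p, ⟨hp1, lt_of_le_of_lt (le_max_left _ _) hp2⟩, rfl⟩⟩
        simp only [Set.mem_setOf_eq, hp1]
        exact lt_of_le_of_lt (le_max_right _ _) hp2
      · refine ⟨max n₀ (n+1), M, fun N hN => ?_⟩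
        rw [Set.sInter_insert]
        rintro x ⟨p, ⟨hp1, hp2⟩, rfl⟩
        constructor
        · exact ⟨p, by simp only [Set.mem_setOf_eq, hp1]; omega, rfl⟩
        · exact hM N (le_trans (le_max_left _ _) hN) ⟨p, ⟨hp1, hp2⟩, rfl⟩
  have hGood : Good Bgen := by
    intro s hssub hsfin
    obtain ⟨n₀, M, hM⟩ := hkey s hsfin hssub
    refine Set.infinite_of_injective_forall_mem
      (f := fun m : ℕ => π (n₀, M n₀ + m + 1)) ?_ ?_
    · intro a b hab
      have := π.injective hab
      simpa using congrArg Prod.snd this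
    · intro m
      exact hM n₀ le_rfl ⟨(n₀, M n₀ + m + 1), ⟨rfl, by omega⟩, rfl⟩
  set F : Filter ℕ := Filter.generate Bgen with hF
  have hFinf : ∀ X ∈ F, X.Infinite := by
    intro X hX
    obtain ⟨s, hs, hsfin, hsub⟩ := Filter.mem_generate_iff.1 hX
    exact (hGood s hs hsfin).mono hsub
  have hFne : F ≠ ⊥ := by
    intro hbot
    have : (∅ : Set ℕ) ∈ F := hbot ▸ Filter.mem_bot
    exact Set.not_nonempty_empty (hFinf _ this).nonempty
  have hFcof : F ≤ Filter.cofinite := by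
    intro X hX
    rw [Filter.mem_cofinite] at hX
    obtain ⟨n, hn⟩ := ((hX.image (fun x => (π.symm x).1))).bddAbove
    have hsub : Bc n ⊆ X := by
      rintro x ⟨p, hp, rfl⟩
      by_contra hc
      have : (π.symm (π p)).1 ≤ n := hn ⟨π p, hc, rfl⟩
      rw [Equiv.symm_apply_apply] at this
      exact absurd hp (by simpa using this)
    exact Filter.mem_of_superset (mem_generate_self (Or.inr ⟨n, rfl⟩)) hsub
  have hBsm : #Bgen < Cardinal.continuum := by
    have h1 : #Bgen ≤ #(Af '' D) + #(Set.range Bc) := Cardinal.mk_union_le _ _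
    have h2 : #(Af '' D) ≤ #D := Cardinal.mk_image_le
    have h3 : #(Set.range Bc) ≤ ℵ₀ := Cardinal.mk_range_le.trans (by simp)
    exact (h1.trans (add_le_add h2 h3)).trans_lt
      (Cardinal.add_lt_of_lt Cardinal.aleph0_le_continuum hDlt Cardinal.aleph0_lt_continuum)
  obtain ⟨U, ⟨hUcof, hUpp⟩, hUF⟩ := hext F hFne hFcof ⟨Bgen, hBsm, rfl⟩
  -- the columns-tails are in U
  have hBcU : ∀ n, Bc n ∈ U := fun n => hUF (mem_generate_self (Or.inr ⟨n, rfl⟩))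
  obtain ⟨S, hSU, hSfin⟩ := hUpp Bc hBcU
  -- bound the columns of S
  set g : ℕ → ℕ := fun n => (hSfin n).toFinset.sup (fun x => (π.symm x).2) with hg
  obtain ⟨f, hfD, hfdom⟩ := hDdom g
  have hAfU : Af f ∈ U := hUF (mem_generate_self (Or.inl ⟨f, hfD, rfl⟩))
  have hSAf : (S ∩ Af f) ∈ U := Filter.inter_mem hSU hAfU
  obtain ⟨x, hxS, hxAf⟩ := Ultrafilter.nonempty_of_mem hSAf
  obtain ⟨p, hp, rfl⟩ := hxAf
  set n := p.1 with hn
  have hxd : π p ∈ S \ Bc n := by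
    refine ⟨hxS, ?_⟩
    rintro ⟨q, hq, hqe⟩
    have : q = p := π.injective hqe
    rw [this] at hq
    exact lt_irrefl n hq
  have hb : (π.symm (π p)).2 ≤ g n := by
    have h := Finset.le_sup (f := fun x => (π.symm x).2) ((hSfin n).mem_toFinset.2 hxd)
    exact h
  rw [Equiv.symm_apply_apply] at hb
  have : g n < f n := hfdom n
  have : p.2 < p.2 := lt_trans (lt_of_le_of_lt hb (hfdom n)) hp
  exact lt_irrefl _ this

/-- Ketonen's theorem. `𝔡 = 𝔠` iff every free filter on ℕ
generated by fewer than 𝔠 sets can be extended to a P-point. -/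
theorem stmt14 :
    dNum = Cardinal.continuum ↔
    ∀ (F : Filter ℕ), F ≠ ⊥ → F ≤ Filter.cofinite →
      (∃ B : Set (Set ℕ), Cardinal.mk B < Cardinal.continuum ∧
        F = Filter.generate B) →
      ∃ U : Ultrafilter ℕ, IsPPoint U ∧ (↑U : Filter ℕ) ≤ F := by
  constructor
  · intro hd F hFne hFcof hgen
    exact forward_direction hd F hFne hFcof hgen
  · exact converse_direction
end
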